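/- Let (S', θ) be modular data with s = S'/δ unitary symmetric, s⁴ = 1, (st)³ = η^{-1}s², η = p⁺/δ. Define on the gauged labels the diagonal matrix T^eq with entries θ_X θ_Y at (XY), θ_X² at (X,ε), and ε η^{1/2} θ_X^{1/2} at (X̂,ε), and let s^eq := S^eq/(2μ) with S^eq the gauged S-matrix defined blockwise as before. Then (s^eq t^eq)³ = η_eq^{-1} (s^eq)² with η_eq = η², where t^eq = T^eq. -/

import Mathlib

/-- Gauged labels of the ℤ/2 permutation gauging: unordered pairs `(XY)` with
`X ≠ Y` (modelled as pairs with `X < Y`), labels `(X,ε)`, and labels `(X̂,ε)`. -/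
abbrev GLabel (I : Type) [LinearOrder I] : Type :=
  {p : I × I // p.1 < p.2} ⊕ (I × Bool) ⊕ (I × Bool)

/-- The sign `ε ∈ {+1, -1}` as a complex number. -/
def sg (ε : Bool) : ℂ := if ε then 1 else -1

/-- The gauged S-matrix `S^eq`, defined blockwise from modular data
`(S', θ)`, a choice of square roots `θ^{1/2}`, `δ = √μ` and `η = p⁺/δ`. -/
noncomputable def gaugedS {I : Type} [LinearOrder I] [Fintype I]
    (S : Matrix I I ℂ) (θ sqrtθ : I → ℂ) (δ η : ℂ) :
    Matrix (GLabel I) (GLabel I) ℂ :=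
  Matrix.of fun a b =>
    match a, b with
    | Sum.inl p, Sum.inl q =>
        2 * (S p.1.1 q.1.1 * S p.1.2 q.1.2 + S p.1.1 q.1.2 * S p.1.2 q.1.1)
    | Sum.inl p, Sum.inr (Sum.inl (Z, _)) => 2 * S p.1.1 Z * S p.1.2 Z
    | Sum.inr (Sum.inl (X, _)), Sum.inl q => 2 * S X q.1.1 * S X q.1.2
    | Sum.inl _, Sum.inr (Sum.inr _) => 0
    | Sum.inr (Sum.inr _), Sum.inl _ => 0
    | Sum.inr (Sum.inl (X, _)), Sum.inr (Sum.inl (Y, _)) => (S X Y) ^ 2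
    | Sum.inr (Sum.inl (X, ε₁)), Sum.inr (Sum.inr (Y, _)) => sg ε₁ * δ * S X Y
    | Sum.inr (Sum.inr (X, _)), Sum.inr (Sum.inl (Y, ε₂)) => sg ε₂ * δ * S Y X
    | Sum.inr (Sum.inr (X, ε₁)), Sum.inr (Sum.inr (Y, ε₂)) =>
        sg ε₁ * sg ε₂ * η⁻¹ * sqrtθ X * sqrtθ Y * (∑ V, S X V * θ V ^ 2 * S V Y)

/-- The diagonal entries of the gauged T-matrix: `θ_Xθ_Y` at `(XY)`, `θ_X²` at
`(X,ε)` and `ε η^{1/2} θ_X^{1/2}` at `(X̂,ε)`. -/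
noncomputable def gaugedTdiag {I : Type} [LinearOrder I]
    (θ sqrtθ : I → ℂ) (sqrtη : ℂ) : GLabel I → ℂ
  | Sum.inl p => θ p.1.1 * θ p.1.2
  | Sum.inr (Sum.inl (X, _)) => θ X ^ 2
  | Sum.inr (Sum.inr (X, ε)) => sg ε * sqrtη * sqrtθ X


lemma expand1 {I : Type} [Fintype I] (a₁ : ℂ) (f₁ g : I → ℂ)
    (h : ∀ z, g z = a₁ * f₁ z) :
    ∑ z, g z = a₁ * (∑ z, f₁ z) := by
  simp only [h, ← Finset.mul_sum]

lemma expand2 {I : Type} [Fintype I] (a₁ a₂ : ℂ) (f₁ f₂ g : I → ℂ)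
    (h : ∀ z, g z = a₁ * f₁ z + a₂ * f₂ z) :
    ∑ z, g z = a₁ * (∑ z, f₁ z) + a₂ * (∑ z, f₂ z) := by
  simp only [h, Finset.sum_add_distrib, ← Finset.mul_sum]

lemma expand4 {I : Type} [Fintype I] (a₁ a₂ a₃ a₄ : ℂ) (f₁ f₂ f₃ f₄ g : I → ℂ)
    (h : ∀ z, g z = a₁ * f₁ z + a₂ * f₂ z + a₃ * f₃ z + a₄ * f₄ z) :
    ∑ z, g z = a₁ * (∑ z, f₁ z) + a₂ * (∑ z, f₂ z) + a₃ * (∑ z, f₃ z) + a₄ * (∑ z, f₄ z) := by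
  simp only [h, Finset.sum_add_distrib, ← Finset.mul_sum]

open Finset in
theorem sum_pairs {I : Type} [LinearOrder I] [Fintype I] (g : I → I → ℂ)
    (hg : ∀ a b, g a b = g b a) :
    (∑ z₁, ∑ z₂, g z₁ z₂) = 2 * (∑ p : {p : I × I // p.1 < p.2}, g p.1.1 p.1.2) + ∑ z, g z z := by
  have h1 : ∑ p : {p : I × I // p.1 < p.2}, g p.1.1 p.1.2
      = ∑ p ∈ univ.filter (fun p : I × I => p.1 < p.2), g p.1 p.2 :=
    (Finset.sum_subtype (univ.filter (fun p : I × I => p.1 < p.2)) (by simp)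
      (fun p => g p.1 p.2)).symm
  have h2 : (∑ z₁, ∑ z₂, g z₁ z₂) = ∑ p : I × I, g p.1 p.2 := by rw [Fintype.sum_prod_type]
  rw [h1, h2]
  have h3 : ∑ p ∈ univ.filter (fun p : I × I => p.2 < p.1), g p.1 p.2
      = ∑ p ∈ univ.filter (fun p : I × I => p.1 < p.2), g p.1 p.2 := by
    apply Finset.sum_nbij' (fun p => Prod.swap p) (fun p => Prod.swap p) <;> simp [hg]
  have h4 : ∑ p ∈ univ.filter (fun p : I × I => p.1 = p.2), g p.1 p.2 = ∑ z, g z z := by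
    apply Finset.sum_nbij' (fun p => p.1) (fun z => (z, z)) <;> simp +contextual
      [Prod.ext_iff, eq_comm]
  have h6 : univ.filter (fun p : I × I => ¬ p.1 < p.2)
      = univ.filter (fun p : I × I => p.2 < p.1) ∪ univ.filter (fun p : I × I => p.1 = p.2) := by
    ext p
    simp only [mem_filter, mem_univ, true_and, mem_union, not_lt]
    constructor
    · intro h
      rcases lt_or_eq_of_le h with h' | h'
      · exact Or.inl h'
      · exact Or.inr h'.symm
    · rintro (h | h)
      · exact le_of_lt h
      · exact le_of_eq h.symm
  have h7 : Disjoint (univ.filter (fun p : I × I => p.2 < p.1))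
      (univ.filter (fun p : I × I => p.1 = p.2)) := by
    rw [Finset.disjoint_left]
    rintro p hp hq
    simp only [mem_filter] at hp hq
    exact absurd hq.2 (ne_of_gt hp.2)
  have h5 := Finset.sum_filter_add_sum_filter_not univ (fun p : I × I => p.1 < p.2)
      (fun p => g p.1 p.2)
  rw [h6, Finset.sum_union h7, h3, h4] at h5
  linear_combination -h5

/-- The normalized gauged modular data satisfies
`(s^eq t^eq)³ = η_eq⁻¹ (s^eq)²` with `η_eq = η²`, where `s^eq = S^eq/(2μ)` and
`t^eq = T^eq` is the gauged T-matrix. -/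
theorem gauged_st_cubed {I : Type} [LinearOrder I] [Fintype I]
    (one : I) (bar : I → I) (S : Matrix I I ℂ) (d : I → ℝ) (δ : ℝ)
    (θ sqrtθ : I → ℂ) (η sqrtη : ℂ)
    (hbar : ∀ X, bar (bar X) = X) (hbar1 : bar one = one)
    (hSsymm : S.IsSymm)
    (hd : ∀ X, 0 < d X) (hS1 : ∀ X, S one X = (d X : ℂ))
    (hδ : 0 < δ) (hδ2 : δ ^ 2 = ∑ X, d X ^ 2)
    (hunit : S * S.conjTranspose = ((δ : ℂ) ^ 2) • 1)
    (hθ1 : θ one = 1) (hθbar : ∀ X, θ (bar X) = θ X) (hθne : ∀ X, θ X ≠ 0)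
    (hη_def : η = (∑ X, θ X * (d X : ℂ) ^ 2) / (δ : ℂ))
    (hηabs : ‖η‖ = 1)
    (hs4 : S ^ 4 = ((δ : ℂ) ^ 4) • 1)
    (hst3 : (S * Matrix.diagonal θ) ^ 3 = (η⁻¹ * (δ : ℂ)) • S ^ 2)
    (hsqθ : ∀ X, sqrtθ X ^ 2 = θ X) (hsqθbar : ∀ X, sqrtθ (bar X) = sqrtθ X)
    (hsqη : sqrtη ^ 2 = η) :
    (((2 * (δ : ℂ) ^ 2)⁻¹ • gaugedS S θ sqrtθ (δ : ℂ) η) *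
        Matrix.diagonal (gaugedTdiag θ sqrtθ sqrtη)) ^ 3
      = (η ^ 2)⁻¹ • ((2 * (δ : ℂ) ^ 2)⁻¹ • gaugedS S θ sqrtθ (δ : ℂ) η) ^ 2 := by
  have hδ0 : (δ : ℂ) ≠ 0 := by simpa using ne_of_gt hδ
  have hη0 : η ≠ 0 := by
    intro h; rw [h] at hηabs; simp at hηabs
  have hδ4 : ((δ:ℂ)^4) ≠ 0 := pow_ne_zero 4 hδ0
  have hl : (((δ : ℂ)^4)⁻¹ • S^3) * S = 1 := by
    rw [smul_mul_assoc, ← pow_succ, hs4, smul_smul, inv_mul_cancel₀ hδ4, one_smul]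
  have h1 : S * (Matrix.diagonal θ*S*Matrix.diagonal θ*S*Matrix.diagonal θ)
      = (η⁻¹ * (δ:ℂ)) • (S*S) := by
    calc S * (Matrix.diagonal θ*S*Matrix.diagonal θ*S*Matrix.diagonal θ)
        = (S*Matrix.diagonal θ)^3 := by rw [pow_succ, pow_two]; noncomm_ring
    _ = (η⁻¹*(δ:ℂ))•S^2 := hst3
    _ = (η⁻¹*(δ:ℂ))•(S*S) := by rw [pow_two]
  have key : Matrix.diagonal θ*S*Matrix.diagonal θ*S*Matrix.diagonal θ = (η⁻¹ * (δ:ℂ)) • S := by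
    have h2 := congrArg (fun M => (((δ : ℂ)^4)⁻¹ • S^3) * M) h1
    rw [← mul_assoc, hl, one_mul] at h2
    rw [h2, mul_smul_comm, ← mul_assoc, smul_mul_assoc, ← pow_succ, hs4, smul_smul,
      inv_mul_cancel₀ hδ4, one_smul, one_mul]
  have key1' : ∀ X Y, θ X * (∑ Z, S X Z * θ Z * S Z Y) * θ Y = η⁻¹ * (δ : ℂ) * S X Y := by
    intro X Y
    have e := congrFun (congrFun key X) Y
    rw [show Matrix.diagonal θ*S*Matrix.diagonal θ*S*Matrix.diagonal θ
        = Matrix.diagonal θ*(S*Matrix.diagonal θ*S)*Matrix.diagonal θ by noncomm_ring] at e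
    rw [Matrix.mul_diagonal, Matrix.diagonal_mul, Matrix.mul_apply] at e
    simp only [Matrix.mul_diagonal, Matrix.smul_apply, smul_eq_mul] at e
    linear_combination e
  -- η² = 1
  have hη2 : η ^ 2 = 1 := by
    have h11 := key1' one one
    have hsum : (∑ Z, S one Z * θ Z * S Z one) = ∑ Z, θ Z * (d Z : ℂ)^2 := by
      refine Finset.sum_congr rfl fun Z _ => ?_
      have hz : S Z one = (d Z : ℂ) := by rw [← hSsymm.apply, hS1]
      rw [hS1, hz]; ring
    have hsum2 : (∑ X, θ X * (d X:ℂ)^2) = η * δ := by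
      rw [hη_def, div_mul_cancel₀ _ hδ0]
    rw [hθ1, hsum, hsum2, hS1] at h11
    -- h11 : 1 * (η * δ) * 1 = η⁻¹ * δ * d one
    have hinv : η * η⁻¹ = 1 := mul_inv_cancel₀ hη0
    have h12 : η * (η * (δ:ℂ)) = (δ:ℂ) * (d one) := by
      linear_combination η * h11 + ((δ:ℂ) * (d one : ℂ)) * hinv
    have hd1 : (d one : ℂ) = η^2 := by
      have h13 : (δ:ℂ) * (d one : ℂ) = (δ:ℂ) * η^2 := by linear_combination -h12
      exact mul_left_cancel₀ hδ0 h13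
    have habs := congrArg (fun z : ℂ => ‖z‖) hd1
    simp only [norm_pow, hηabs, Complex.norm_real, Real.norm_eq_abs, one_pow] at habs
    rw [abs_of_pos (hd one)] at habs
    rw [← hd1, habs]; norm_num
  have hηinv : η⁻¹ = η := inv_eq_of_mul_eq_one_right (by linear_combination hη2)
  have hinv : η * η⁻¹ = 1 := mul_inv_cancel₀ hη0
  have hSs : ∀ i j, S i j = S j i := fun i j => hSsymm.apply j i
  have hkey1 : ∀ X Y, θ X * (∑ Z, S X Z * θ Z * S Z Y) * θ Y = η * (δ : ℂ) * S X Y := by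
    intro X Y; rw [← hηinv]; exact key1' X Y
  -- key2
  have hkey2 : ∀ X Y, θ X^2 * (∑ Z, S X Z * θ Z * (∑ V, S Z V * θ V ^ 2 * S V Y)) * θ Y
      = (δ:ℂ)^2 * S X Y := by
    intro X Y
    have h1 : (∑ Z, S X Z * θ Z * (∑ V, S Z V * θ V ^ 2 * S V Y))
        = ∑ V, (∑ Z, S X Z * θ Z * S Z V) * (θ V ^ 2 * S V Y) := by
      simp only [Finset.mul_sum]
      rw [Finset.sum_comm]
      refine Finset.sum_congr rfl fun V _ => ?_
      rw [Finset.sum_mul]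
      exact Finset.sum_congr rfl fun Z _ => by ring
    rw [h1]
    calc θ X^2 * (∑ V, (∑ Z, S X Z * θ Z * S Z V) * (θ V ^ 2 * S V Y)) * θ Y
        = ∑ V, (θ X * (∑ Z, S X Z * θ Z * S Z V) * θ V) * (θ X * θ V * S V Y * θ Y) := by
          simp only [Finset.mul_sum, Finset.sum_mul]
          exact Finset.sum_congr rfl fun V _ => Finset.sum_congr rfl fun z _ => by ring
      _ = ∑ V, (η * δ * S X V) * (θ X * θ V * S V Y * θ Y) := by
          exact Finset.sum_congr rfl fun V _ => by rw [hkey1]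
      _ = (η * δ) * (θ X * (∑ V, S X V * θ V * S V Y) * θ Y) := by
          simp only [Finset.mul_sum, Finset.sum_mul]
          exact Finset.sum_congr rfl fun V _ => by ring
      _ = (η * δ) * (η * δ * S X Y) := by rw [hkey1]
      _ = (δ:ℂ)^2 * S X Y := by linear_combination ((δ:ℂ)^2 * S X Y) * hη2
  have hkey2' : ∀ X Y, θ X * (∑ Z, (∑ V, S X V * θ V ^ 2 * S V Z) * θ Z * S Z Y) * θ Y^2
      = (δ:ℂ)^2 * S X Y := by
    intro X Y
    have h1 : (∑ Z, (∑ V, S X V * θ V ^ 2 * S V Z) * θ Z * S Z Y)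
        = ∑ V, (S X V * θ V ^ 2) * (∑ Z, S V Z * θ Z * S Z Y) := by
      simp only [Finset.sum_mul]
      rw [Finset.sum_comm]
      refine Finset.sum_congr rfl fun V _ => ?_
      rw [Finset.mul_sum]
      exact Finset.sum_congr rfl fun Z _ => by ring
    rw [h1]
    calc θ X * (∑ V, (S X V * θ V ^ 2) * (∑ Z, S V Z * θ Z * S Z Y)) * θ Y^2
        = ∑ V, (θ V * (∑ Z, S V Z * θ Z * S Z Y) * θ Y) * (θ X * S X V * θ V * θ Y) := by
          simp only [Finset.mul_sum, Finset.sum_mul]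
          exact Finset.sum_congr rfl fun V _ => Finset.sum_congr rfl fun z _ => by ring
      _ = ∑ V, (η * δ * S V Y) * (θ X * S X V * θ V * θ Y) := by
          exact Finset.sum_congr rfl fun V _ => by rw [hkey1]
      _ = (η * δ) * (θ X * (∑ V, S X V * θ V * S V Y) * θ Y) := by
          simp only [Finset.mul_sum, Finset.sum_mul]
          exact Finset.sum_congr rfl fun V _ => by ring
      _ = (η * δ) * (η * δ * S X Y) := by rw [hkey1]
      _ = (δ:ℂ)^2 * S X Y := by linear_combination ((δ:ℂ)^2 * S X Y) * hη2
  have hsg2 : ∀ ε, sg ε * sg ε = 1 := by intro ε; cases ε <;> simp [sg]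
  -- the main gauged identity
  have hG : Matrix.diagonal (gaugedTdiag θ sqrtθ sqrtη) *
        (gaugedS S θ sqrtθ (δ:ℂ) η * Matrix.diagonal (gaugedTdiag θ sqrtθ sqrtη) *
          gaugedS S θ sqrtθ (δ:ℂ) η) * Matrix.diagonal (gaugedTdiag θ sqrtθ sqrtη)
      = (2*(δ:ℂ)^2) • gaugedS S θ sqrtθ (δ:ℂ) η := by
    ext a b
    rw [Matrix.mul_diagonal, Matrix.diagonal_mul, Matrix.smul_apply, smul_eq_mul]
    rw [Matrix.mul_apply]
    simp only [Matrix.mul_diagonal]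
    rw [Fintype.sum_sum_type, Fintype.sum_sum_type, Fintype.sum_prod_type, Fintype.sum_prod_type]
    simp only [Fintype.sum_bool]
    obtain ⟨⟨X₁, X₂⟩, hX⟩ | ⟨X, ε₁⟩ | ⟨X, ε₁⟩ := a <;>
      obtain ⟨⟨Y₁, Y₂⟩, hY⟩ | ⟨Y, ε₂⟩ | ⟨Y, ε₂⟩ := b
    all_goals simp only [gaugedS, gaugedTdiag, Matrix.of_apply, show sg true = 1 from rfl,
      show sg false = -1 from rfl, one_mul, neg_mul, mul_zero, zero_mul, mul_neg, neg_neg,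
      neg_zero, add_zero, zero_add, Finset.sum_const_zero]
    -- case 1 : pair/pair
    · have hpair1 : (∑ z₁, ∑ z₂, 2 * (S X₁ z₁ * S X₂ z₂ + S X₁ z₂ * S X₂ z₁) * (θ z₁ * θ z₂) *
            (2 * (S z₁ Y₁ * S z₂ Y₂ + S z₁ Y₂ * S z₂ Y₁)))
          = 2 * (∑ p : {p : I × I // p.1 < p.2},
              2 * (S X₁ p.1.1 * S X₂ p.1.2 + S X₁ p.1.2 * S X₂ p.1.1) * (θ p.1.1 * θ p.1.2) *
                (2 * (S p.1.1 Y₁ * S p.1.2 Y₂ + S p.1.1 Y₂ * S p.1.2 Y₁)))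
            + ∑ z, 2 * (S X₁ z * S X₂ z + S X₁ z * S X₂ z) * (θ z * θ z) *
                (2 * (S z Y₁ * S z Y₂ + S z Y₂ * S z Y₁)) :=
        sum_pairs _ (fun a b => by ring)
      have hD1 : (∑ z, 2 * (S X₁ z * S X₂ z + S X₁ z * S X₂ z) * (θ z * θ z) *
            (2 * (S z Y₁ * S z Y₂ + S z Y₂ * S z Y₁)))
          = 2 * ∑ x : I, (2 * S X₁ x * S X₂ x * θ x ^ 2 * (2 * S x Y₁ * S x Y₂) +
              2 * S X₁ x * S X₂ x * θ x ^ 2 * (2 * S x Y₁ * S x Y₂)) := by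
        rw [Finset.mul_sum]
        exact Finset.sum_congr rfl fun z _ => by ring
      have inner1 : ∀ z₁, (∑ z₂, 2 * (S X₁ z₁ * S X₂ z₂ + S X₁ z₂ * S X₂ z₁) * (θ z₁ * θ z₂) *
            (2 * (S z₁ Y₁ * S z₂ Y₂ + S z₁ Y₂ * S z₂ Y₁)))
          = (4 * (S X₁ z₁ * θ z₁ * S z₁ Y₁)) * (∑ z, S X₂ z * θ z * S z Y₂)
            + (4 * (S X₁ z₁ * θ z₁ * S z₁ Y₂)) * (∑ z, S X₂ z * θ z * S z Y₁)
            + (4 * (S X₂ z₁ * θ z₁ * S z₁ Y₁)) * (∑ z, S X₁ z * θ z * S z Y₂)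
            + (4 * (S X₂ z₁ * θ z₁ * S z₁ Y₂)) * (∑ z, S X₁ z * θ z * S z Y₁) :=
        fun z₁ => expand4 _ _ _ _ _ _ _ _ _ (fun z₂ => by ring)
      have hGG1 : (∑ z₁, ∑ z₂, 2 * (S X₁ z₁ * S X₂ z₂ + S X₁ z₂ * S X₂ z₁) * (θ z₁ * θ z₂) *
            (2 * (S z₁ Y₁ * S z₂ Y₂ + S z₁ Y₂ * S z₂ Y₁)))
          = (4 * (∑ z, S X₂ z * θ z * S z Y₂)) * (∑ z, S X₁ z * θ z * S z Y₁)
            + (4 * (∑ z, S X₂ z * θ z * S z Y₁)) * (∑ z, S X₁ z * θ z * S z Y₂)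
            + (4 * (∑ z, S X₁ z * θ z * S z Y₂)) * (∑ z, S X₂ z * θ z * S z Y₁)
            + (4 * (∑ z, S X₁ z * θ z * S z Y₁)) * (∑ z, S X₂ z * θ z * S z Y₂) :=
        expand4 _ _ _ _ _ _ _ _ _ (fun z₁ => by rw [inner1 z₁]; ring)
      linear_combination (-(θ X₁ * θ X₂ * (θ Y₁ * θ Y₂)/2)) * hpair1
        + (-(θ X₁ * θ X₂ * (θ Y₁ * θ Y₂)/2)) * hD1
        + (θ X₁ * θ X₂ * (θ Y₁ * θ Y₂)/2) * hGG1
        + (4 * ((θ X₂ * ∑ z, S X₂ z * θ z * S z Y₂) * θ Y₂)) * hkey1 X₁ Y₁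
        + (4 * (η * (δ:ℂ) * S X₁ Y₁)) * hkey1 X₂ Y₂
        + (4 * ((θ X₂ * ∑ z, S X₂ z * θ z * S z Y₁) * θ Y₁)) * hkey1 X₁ Y₂
        + (4 * (η * (δ:ℂ) * S X₁ Y₂)) * hkey1 X₂ Y₁
        + (4 * (δ:ℂ)^2 * (S X₁ Y₁ * S X₂ Y₂ + S X₁ Y₂ * S X₂ Y₁)) * hη2
    -- case 2 : pair/(Y,ε₂)
    · have hpair2 : (∑ z₁, ∑ z₂, 2 * (S X₁ z₁ * S X₂ z₂ + S X₁ z₂ * S X₂ z₁) * (θ z₁ * θ z₂) *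
            (2 * S z₁ Y * S z₂ Y))
          = 2 * (∑ p : {p : I × I // p.1 < p.2},
              2 * (S X₁ p.1.1 * S X₂ p.1.2 + S X₁ p.1.2 * S X₂ p.1.1) * (θ p.1.1 * θ p.1.2) *
                (2 * S p.1.1 Y * S p.1.2 Y))
            + ∑ z, 2 * (S X₁ z * S X₂ z + S X₁ z * S X₂ z) * (θ z * θ z) * (2 * S z Y * S z Y) :=
        sum_pairs _ (fun a b => by ring)
      have hD2 : (∑ z, 2 * (S X₁ z * S X₂ z + S X₁ z * S X₂ z) * (θ z * θ z) *
            (2 * S z Y * S z Y))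
          = 2 * ∑ x : I, (2 * S X₁ x * S X₂ x * θ x ^ 2 * S x Y ^ 2 +
              2 * S X₁ x * S X₂ x * θ x ^ 2 * S x Y ^ 2) := by
        rw [Finset.mul_sum]
        exact Finset.sum_congr rfl fun z _ => by ring
      have inner2 : ∀ z₁, (∑ z₂, 2 * (S X₁ z₁ * S X₂ z₂ + S X₁ z₂ * S X₂ z₁) * (θ z₁ * θ z₂) *
            (2 * S z₁ Y * S z₂ Y))
          = (4 * (S X₁ z₁ * θ z₁ * S z₁ Y)) * (∑ z, S X₂ z * θ z * S z Y)
            + (4 * (S X₂ z₁ * θ z₁ * S z₁ Y)) * (∑ z, S X₁ z * θ z * S z Y) :=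
        fun z₁ => expand2 _ _ _ _ _ (fun z₂ => by ring)
      have hGG2 : (∑ z₁, ∑ z₂, 2 * (S X₁ z₁ * S X₂ z₂ + S X₁ z₂ * S X₂ z₁) * (θ z₁ * θ z₂) *
            (2 * S z₁ Y * S z₂ Y))
          = (4 * (∑ z, S X₂ z * θ z * S z Y)) * (∑ z, S X₁ z * θ z * S z Y)
            + (4 * (∑ z, S X₁ z * θ z * S z Y)) * (∑ z, S X₂ z * θ z * S z Y) :=
        expand2 _ _ _ _ _ (fun z₁ => by rw [inner2 z₁]; ring)
      linear_combination (-(θ X₁ * θ X₂ * θ Y ^ 2/2)) * hpair2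
        + (-(θ X₁ * θ X₂ * θ Y ^ 2/2)) * hD2
        + (θ X₁ * θ X₂ * θ Y ^ 2/2) * hGG2
        + (4 * ((θ X₂ * ∑ z, S X₂ z * θ z * S z Y) * θ Y)) * hkey1 X₁ Y
        + (4 * (η * (δ:ℂ) * S X₁ Y)) * hkey1 X₂ Y
        + (4 * (δ:ℂ)^2 * (S X₁ Y * S X₂ Y)) * hη2
    -- case 3 : pair/hat
    · have hA0 : (∑ x : I, (2 * S X₁ x * S X₂ x * θ x ^ 2 * ((δ:ℂ) * S x Y) +
            -(2 * S X₁ x * S X₂ x * θ x ^ 2 * ((δ:ℂ) * S x Y)))) = 0 :=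
        Finset.sum_eq_zero fun x _ => by ring
      linear_combination (θ X₁ * θ X₂ * (sg ε₂ * sqrtη * sqrtθ Y)) * hA0
    -- case 4 : (X,ε₁)/pair
    · have hpair4 : (∑ z₁, ∑ z₂, 2 * S X z₁ * S X z₂ * (θ z₁ * θ z₂) *
            (2 * (S z₁ Y₁ * S z₂ Y₂ + S z₁ Y₂ * S z₂ Y₁)))
          = 2 * (∑ p : {p : I × I // p.1 < p.2},
              2 * S X p.1.1 * S X p.1.2 * (θ p.1.1 * θ p.1.2) *
                (2 * (S p.1.1 Y₁ * S p.1.2 Y₂ + S p.1.1 Y₂ * S p.1.2 Y₁)))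
            + ∑ z, 2 * S X z * S X z * (θ z * θ z) * (2 * (S z Y₁ * S z Y₂ + S z Y₂ * S z Y₁)) :=
        sum_pairs _ (fun a b => by ring)
      have hD4 : (∑ z, 2 * S X z * S X z * (θ z * θ z) * (2 * (S z Y₁ * S z Y₂ + S z Y₂ * S z Y₁)))
          = 2 * ∑ x : I, (S X x ^ 2 * θ x ^ 2 * (2 * S x Y₁ * S x Y₂) +
              S X x ^ 2 * θ x ^ 2 * (2 * S x Y₁ * S x Y₂)) := by
        rw [Finset.mul_sum]
        exact Finset.sum_congr rfl fun z _ => by ring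
      have inner4 : ∀ z₁, (∑ z₂, 2 * S X z₁ * S X z₂ * (θ z₁ * θ z₂) *
            (2 * (S z₁ Y₁ * S z₂ Y₂ + S z₁ Y₂ * S z₂ Y₁)))
          = (4 * (S X z₁ * θ z₁ * S z₁ Y₁)) * (∑ z, S X z * θ z * S z Y₂)
            + (4 * (S X z₁ * θ z₁ * S z₁ Y₂)) * (∑ z, S X z * θ z * S z Y₁) :=
        fun z₁ => expand2 _ _ _ _ _ (fun z₂ => by ring)
      have hGG4 : (∑ z₁, ∑ z₂, 2 * S X z₁ * S X z₂ * (θ z₁ * θ z₂) *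
            (2 * (S z₁ Y₁ * S z₂ Y₂ + S z₁ Y₂ * S z₂ Y₁)))
          = (4 * (∑ z, S X z * θ z * S z Y₂)) * (∑ z, S X z * θ z * S z Y₁)
            + (4 * (∑ z, S X z * θ z * S z Y₁)) * (∑ z, S X z * θ z * S z Y₂) :=
        expand2 _ _ _ _ _ (fun z₁ => by rw [inner4 z₁]; ring)
      linear_combination (-(θ X ^ 2 * (θ Y₁ * θ Y₂)/2)) * hpair4
        + (-(θ X ^ 2 * (θ Y₁ * θ Y₂)/2)) * hD4
        + (θ X ^ 2 * (θ Y₁ * θ Y₂)/2) * hGG4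
        + (4 * ((θ X * ∑ z, S X z * θ z * S z Y₂) * θ Y₂)) * hkey1 X Y₁
        + (4 * (η * (δ:ℂ) * S X Y₁)) * hkey1 X Y₂
        + (4 * (δ:ℂ)^2 * (S X Y₁ * S X Y₂)) * hη2
    -- case 5 : (X,ε₁)/(Y,ε₂)
    · have hpair5 : (∑ z₁, ∑ z₂, 2 * S X z₁ * S X z₂ * (θ z₁ * θ z₂) * (2 * S z₁ Y * S z₂ Y))
          = 2 * (∑ p : {p : I × I // p.1 < p.2},
              2 * S X p.1.1 * S X p.1.2 * (θ p.1.1 * θ p.1.2) * (2 * S p.1.1 Y * S p.1.2 Y))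
            + ∑ z, 2 * S X z * S X z * (θ z * θ z) * (2 * S z Y * S z Y) :=
        sum_pairs _ (fun a b => by ring)
      have hD5 : (∑ z, 2 * S X z * S X z * (θ z * θ z) * (2 * S z Y * S z Y))
          = 2 * ∑ x : I, (S X x ^ 2 * θ x ^ 2 * S x Y ^ 2 + S X x ^ 2 * θ x ^ 2 * S x Y ^ 2) := by
        rw [Finset.mul_sum]
        exact Finset.sum_congr rfl fun z _ => by ring
      have hH5 : (∑ x : I, (sg ε₁ * (δ:ℂ) * S X x * (sqrtη * sqrtθ x) * (sg ε₂ * (δ:ℂ) * S Y x) +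
            -(sg ε₁ * (δ:ℂ) * S X x * (sqrtη * sqrtθ x) * (sg ε₂ * (δ:ℂ) * S Y x)))) = 0 :=
        Finset.sum_eq_zero fun x _ => by ring
      have inner5 : ∀ z₁, (∑ z₂, 2 * S X z₁ * S X z₂ * (θ z₁ * θ z₂) * (2 * S z₁ Y * S z₂ Y))
          = (4 * (S X z₁ * θ z₁ * S z₁ Y)) * (∑ z, S X z * θ z * S z Y) :=
        fun z₁ => expand1 _ _ _ (fun z₂ => by ring)
      have hGG5 : (∑ z₁, ∑ z₂, 2 * S X z₁ * S X z₂ * (θ z₁ * θ z₂) * (2 * S z₁ Y * S z₂ Y))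
          = (4 * (∑ z, S X z * θ z * S z Y)) * (∑ z, S X z * θ z * S z Y) :=
        expand1 _ _ _ (fun z₁ => by rw [inner5 z₁]; ring)
      linear_combination (-(θ X ^ 2 * θ Y ^ 2/2)) * hpair5
        + (-(θ X ^ 2 * θ Y ^ 2/2)) * hD5
        + (θ X ^ 2 * θ Y ^ 2/2) * hGG5
        + (θ X ^ 2 * θ Y ^ 2) * hH5
        + (2 * ((θ X * ∑ z, S X z * θ z * S z Y) * θ Y + η * (δ:ℂ) * S X Y)) * hkey1 X Y
        + (2 * (δ:ℂ)^2 * S X Y ^ 2) * hη2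
    -- case 6 : (X,ε₁)/hat(Y,ε₂)
    · have hA6 : (∑ x : I, (S X x ^ 2 * θ x ^ 2 * ((δ:ℂ) * S x Y) +
            -(S X x ^ 2 * θ x ^ 2 * ((δ:ℂ) * S x Y)))) = 0 :=
        Finset.sum_eq_zero fun x _ => by ring
      have hH6 : (∑ x : I, (sg ε₁ * (δ:ℂ) * S X x * (sqrtη * sqrtθ x) *
              (sg ε₂ * η⁻¹ * sqrtθ x * sqrtθ Y * ∑ V : I, S x V * θ V ^ 2 * S V Y) +
            sg ε₁ * (δ:ℂ) * S X x * (sqrtη * sqrtθ x) *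
              (sg ε₂ * η⁻¹ * sqrtθ x * sqrtθ Y * ∑ V : I, S x V * θ V ^ 2 * S V Y)))
          = (2 * sg ε₁ * sg ε₂ * (δ:ℂ) * sqrtη * η⁻¹ * sqrtθ Y) *
              ∑ x : I, S X x * θ x * (∑ V : I, S x V * θ V ^ 2 * S V Y) := by
        rw [Finset.mul_sum]
        refine Finset.sum_congr rfl fun x _ => ?_
        linear_combination (2 * sg ε₁ * sg ε₂ * (δ:ℂ) * sqrtη * η⁻¹ * sqrtθ Y * S X x *
          (∑ V : I, S x V * θ V ^ 2 * S V Y)) * hsqθ x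
      linear_combination (θ X ^ 2 * (sg ε₂ * sqrtη * sqrtθ Y)) * hA6
        + (θ X ^ 2 * (sg ε₂ * sqrtη * sqrtθ Y)) * hH6
        + (2 * sg ε₁ * (δ:ℂ) * sqrtη ^ 2 * η⁻¹ * sqrtθ Y ^ 2 * θ X ^ 2 *
            (∑ x : I, S X x * θ x * (∑ V : I, S x V * θ V ^ 2 * S V Y))) * hsg2 ε₂
        + (2 * sg ε₁ * (δ:ℂ) * η⁻¹ * sqrtθ Y ^ 2 * θ X ^ 2 *
            (∑ x : I, S X x * θ x * (∑ V : I, S x V * θ V ^ 2 * S V Y))) * hsqη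
        + (2 * sg ε₁ * (δ:ℂ) * η * η⁻¹ * θ X ^ 2 *
            (∑ x : I, S X x * θ x * (∑ V : I, S x V * θ V ^ 2 * S V Y))) * hsqθ Y
        + (2 * sg ε₁ * (δ:ℂ) * θ X ^ 2 *
            (∑ x : I, S X x * θ x * (∑ V : I, S x V * θ V ^ 2 * S V Y)) * θ Y) * hinv
        + (2 * sg ε₁ * (δ:ℂ)) * hkey2 X Y
    -- case 7 : hat/pair
    · have hA7 : (∑ x : I, ((δ:ℂ) * S x X * θ x ^ 2 * (2 * S x Y₁ * S x Y₂) +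
            -((δ:ℂ) * S x X * θ x ^ 2 * (2 * S x Y₁ * S x Y₂)))) = 0 :=
        Finset.sum_eq_zero fun x _ => by ring
      linear_combination (sg ε₁ * sqrtη * sqrtθ X * (θ Y₁ * θ Y₂)) * hA7
    -- case 8 : hat(X,ε₁)/(Y,ε₂)
    · have hA8 : (∑ x : I, ((δ:ℂ) * S x X * θ x ^ 2 * S x Y ^ 2 +
            -((δ:ℂ) * S x X * θ x ^ 2 * S x Y ^ 2))) = 0 :=
        Finset.sum_eq_zero fun x _ => by ring
      have hH8 : (∑ x : I, ((sg ε₁ * 1 * η⁻¹ * sqrtθ X * sqrtθ x * ∑ V : I, S X V * θ V ^ 2 * S V x) *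
              (sqrtη * sqrtθ x) * (sg ε₂ * (δ:ℂ) * S Y x) +
            (sg ε₁ * 1 * η⁻¹ * sqrtθ X * sqrtθ x * ∑ V : I, S X V * θ V ^ 2 * S V x) *
              (sqrtη * sqrtθ x) * (sg ε₂ * (δ:ℂ) * S Y x)))
          = (2 * sg ε₁ * sg ε₂ * η⁻¹ * sqrtθ X * sqrtη * (δ:ℂ)) *
              ∑ x : I, (∑ V : I, S X V * θ V ^ 2 * S V x) * θ x * S x Y := by
        rw [Finset.mul_sum]
        refine Finset.sum_congr rfl fun x _ => ?_
        linear_combination (2 * sg ε₁ * sg ε₂ * η⁻¹ * sqrtθ X * sqrtη * (δ:ℂ) *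
            (∑ V : I, S X V * θ V ^ 2 * S V x) * S Y x) * hsqθ x
          + (2 * sg ε₁ * sg ε₂ * η⁻¹ * sqrtθ X * sqrtη * (δ:ℂ) *
            (∑ V : I, S X V * θ V ^ 2 * S V x) * θ x) * hSs Y x
      linear_combination (sg ε₁ * sqrtη * sqrtθ X * θ Y ^ 2) * hA8
        + (sg ε₁ * sqrtη * sqrtθ X * θ Y ^ 2) * hH8
        + (2 * sg ε₂ * (δ:ℂ) * η⁻¹ * sqrtη ^ 2 * sqrtθ X ^ 2 * θ Y ^ 2 *
            (∑ x : I, (∑ V : I, S X V * θ V ^ 2 * S V x) * θ x * S x Y)) * hsg2 ε₁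
        + (2 * sg ε₂ * (δ:ℂ) * η⁻¹ * sqrtθ X ^ 2 * θ Y ^ 2 *
            (∑ x : I, (∑ V : I, S X V * θ V ^ 2 * S V x) * θ x * S x Y)) * hsqη
        + (2 * sg ε₂ * (δ:ℂ) * η * η⁻¹ * θ Y ^ 2 *
            (∑ x : I, (∑ V : I, S X V * θ V ^ 2 * S V x) * θ x * S x Y)) * hsqθ X
        + (2 * sg ε₂ * (δ:ℂ) * θ X *
            (∑ x : I, (∑ V : I, S X V * θ V ^ 2 * S V x) * θ x * S x Y) * θ Y ^ 2) * hinv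
        + (2 * sg ε₂ * (δ:ℂ)) * hkey2' X Y
        + (-(2 * sg ε₂ * (δ:ℂ)^3)) * hSs Y X
    -- case 9 : hat/hat
    · have hA9 : (∑ x : I, ((δ:ℂ) * S x X * θ x ^ 2 * ((δ:ℂ) * S x Y) +
            (δ:ℂ) * S x X * θ x ^ 2 * ((δ:ℂ) * S x Y)))
          = (2 * (δ:ℂ)^2) * ∑ V : I, S X V * θ V ^ 2 * S V Y := by
        rw [Finset.mul_sum]
        refine Finset.sum_congr rfl fun x _ => ?_
        linear_combination (2 * (δ:ℂ)^2 * θ x ^ 2 * S x Y) * hSs x X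
      have hH9 : (∑ x : I, ((sg ε₁ * 1 * η⁻¹ * sqrtθ X * sqrtθ x * ∑ V : I, S X V * θ V ^ 2 * S V x) *
              (sqrtη * sqrtθ x) *
              (sg ε₂ * η⁻¹ * sqrtθ x * sqrtθ Y * ∑ V : I, S x V * θ V ^ 2 * S V Y) +
            -((sg ε₁ * 1 * η⁻¹ * sqrtθ X * sqrtθ x * ∑ V : I, S X V * θ V ^ 2 * S V x) *
              (sqrtη * sqrtθ x) *
              (sg ε₂ * η⁻¹ * sqrtθ x * sqrtθ Y * ∑ V : I, S x V * θ V ^ 2 * S V Y)))) = 0 :=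
        Finset.sum_eq_zero fun x _ => by ring
      linear_combination (sg ε₁ * sqrtη * sqrtθ X * (sg ε₂ * sqrtη * sqrtθ Y)) * hA9
        + (sg ε₁ * sqrtη * sqrtθ X * (sg ε₂ * sqrtη * sqrtθ Y)) * hH9
        + (2 * sg ε₁ * sg ε₂ * (δ:ℂ)^2 * sqrtθ X * sqrtθ Y *
            (∑ V : I, S X V * θ V ^ 2 * S V Y)) * hsqη
        + (-(2 * sg ε₁ * sg ε₂ * (δ:ℂ)^2 * sqrtθ X * sqrtθ Y *
            (∑ V : I, S X V * θ V ^ 2 * S V Y))) * hηinv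
  -- assembly
  have hη21 : (η^2)⁻¹ = 1 := by rw [hη2]; norm_num
  rw [hη21, one_smul]
  rw [smul_mul_assoc, smul_pow, smul_pow]
  rw [show (gaugedS S θ sqrtθ (δ:ℂ) η * Matrix.diagonal (gaugedTdiag θ sqrtθ sqrtη)) ^ 3
      = gaugedS S θ sqrtθ (δ:ℂ) η * (Matrix.diagonal (gaugedTdiag θ sqrtθ sqrtη) *
        (gaugedS S θ sqrtθ (δ:ℂ) η * Matrix.diagonal (gaugedTdiag θ sqrtθ sqrtη) *
          gaugedS S θ sqrtθ (δ:ℂ) η) * Matrix.diagonal (gaugedTdiag θ sqrtθ sqrtη)) from by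
        rw [pow_succ, pow_two]; noncomm_ring]
  rw [hG, mul_smul_comm, smul_smul]
  conv_rhs => rw [pow_two]
  congr 1
  · have hc0 : (2*(δ:ℂ)^2) ≠ 0 := mul_ne_zero two_ne_zero (pow_ne_zero _ hδ0)
    field_simp
  · exact (pow_two _).symm
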